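/- Let q be a self-join-free Boolean conjunctive query, db a database instance, and V a nonempty subset of vars(q) such that no variable of V is attacked in q. Then there exists a repair r of db such that rifi(q,r,V) equals the intersection of rifi(q,s,V) over all repairs s of db. -/

import Mathlib

open scoped Classical

/-! ## Variables, constants, relation names -/

abbrev Var : Type := ℕ
abbrev RelName : Type := ℕ

/-- A term: a variable or a constant (a non-negative rational). -/
inductive Trm : Type where
  | var : Var → Trm
  | const : ℚ≥0 → Trm
deriving DecidableEq

/-- An atom `R(x̲, y)`: relation name, primary-key arguments, remaining arguments. -/
structure DBAtom : Type where
  rel : RelName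
  keyArgs : List Trm
  nonkeyArgs : List Trm
deriving DecidableEq, Inhabited

/-- A fact: an atom without variables. -/
structure DBFact : Type where
  rel : RelName
  keyArgs : List ℚ≥0
  nonkeyArgs : List ℚ≥0
deriving DecidableEq

def Trm.var? : Trm → Option Var
  | .var v => some v
  | .const _ => none

def Trm.const? : Trm → Option ℚ≥0
  | .var _ => none
  | .const c => some c

def DBAtom.keyVars (F : DBAtom) : Finset Var := (F.keyArgs.filterMap Trm.var?).toFinset

def DBAtom.allVars (F : DBAtom) : Finset Var :=
  ((F.keyArgs ++ F.nonkeyArgs).filterMap Trm.var?).toFinset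

def DBAtom.notkeyVars (F : DBAtom) : Finset Var := F.allVars \ F.keyVars

def qVars (q : List DBAtom) : Finset Var := q.foldr (fun F s => F.allVars ∪ s) ∅

/-- Self-join-free: pairwise distinct relation names. -/
def SelfJoinFree (q : List DBAtom) : Prop := (q.map DBAtom.rel).Nodup

def KeyEqual (f g : DBFact) : Prop := f.rel = g.rel ∧ f.keyArgs = g.keyArgs

def DBConsistent (s : Finset DBFact) : Prop :=
  ∀ f ∈ s, ∀ g ∈ s, KeyEqual f g → f = g

/-- A repair: an inclusion-maximal consistent subset. -/
def IsRepair (db r : Finset DBFact) : Prop :=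
  r ⊆ db ∧ DBConsistent r ∧
    ∀ s : Finset DBFact, r ⊆ s → s ⊆ db → DBConsistent s → s = r

/-! ## Valuations (partial maps from variables to constants) -/

abbrev Assignment : Type := Var → Option ℚ≥0

def Assignment.Dom (θ : Assignment) : Set Var := {v | θ v ≠ none}

def Assignment.ExtendsA (μ θ : Assignment) : Prop :=
  ∀ (v : Var) (c : ℚ≥0), θ v = some c → μ v = some c

noncomputable def Assignment.restrict (θ : Assignment) (S : Set Var) : Assignment :=
  fun v => if v ∈ S then θ v else none

def emptyAssignment : Assignment := fun _ => none

/-- Combination of two valuations (the first takes precedence). -/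
def Assignment.comb (θ μ : Assignment) : Assignment :=
  fun v => (θ v).orElse (fun _ => μ v)

def applyTrm (θ : Assignment) : Trm → Trm
  | .var v => (θ v).elim (Trm.var v) Trm.const
  | .const c => .const c

def applyAtom (θ : Assignment) (F : DBAtom) : DBAtom :=
  ⟨F.rel, F.keyArgs.map (applyTrm θ), F.nonkeyArgs.map (applyTrm θ)⟩

def applyQ (θ : Assignment) (q : List DBAtom) : List DBAtom := q.map (applyAtom θ)

def DBAtom.toFact? (F : DBAtom) : Option DBFact := do
  let ks ← F.keyArgs.mapM Trm.const?
  let ns ← F.nonkeyArgs.mapM Trm.const?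
  pure (DBFact.mk F.rel ks ns)

def AtomIn (s : Finset DBFact) (F : DBAtom) : Prop := ∃ f ∈ s, F.toFact? = some f

/-- `(s, θ) ⊨ q`: θ extends to a valuation over dom(θ) ∪ vars(q) mapping all atoms of q into s. -/
def Entails (s : Finset DBFact) (θ : Assignment) (q : List DBAtom) : Prop :=
  ∃ μ : Assignment, μ.Dom = θ.Dom ∪ ↑(qVars q) ∧ μ.ExtendsA θ ∧
    ∀ F ∈ q, AtomIn s (applyAtom μ F)

/-! ## Functional dependencies -/

def FDSatT (N : Set (Var → ℚ≥0)) (X Y : Finset Var) : Prop :=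
  ∀ t₁ ∈ N, ∀ t₂ ∈ N, (∀ x ∈ X, t₁ x = t₂ x) → ∀ y ∈ Y, t₁ y = t₂ y

/-- Standard logical implication of functional dependencies. -/
def FDImp (fds : Set (Finset Var × Finset Var)) (X Y : Finset Var) : Prop :=
  ∀ N : Set (Var → ℚ≥0), (∀ fd ∈ fds, FDSatT N fd.1 fd.2) → FDSatT N X Y

def FDSet (q : List DBAtom) : Set (Finset Var × Finset Var) :=
  {p | ∃ F ∈ q, p = (F.keyVars, F.allVars)}

def keycl (F : DBAtom) (q : List DBAtom) : Set Var :=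
  {x | x ∈ qVars q ∧ FDImp (FDSet (q.erase F)) F.keyVars {x}}

/-! ## Attacks and the attack graph -/

def AdjIn (q : List DBAtom) (a b : Var) : Prop :=
  ∃ G ∈ q, a ∈ G.allVars ∧ b ∈ G.allVars

/-- Atom F attacks variable x in q. -/
def AttacksVar (q : List DBAtom) (F : DBAtom) (x : Var) : Prop :=
  ∃ l : List Var, (∀ v ∈ l, v ∉ keycl F q) ∧
    (∃ h, l.head? = some h ∧ h ∈ F.notkeyVars) ∧
    l.getLast? = some x ∧ l.Chain' (AdjIn q)

def AttacksAtom (q : List DBAtom) (F G : DBAtom) : Prop :=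
  ∃ x ∈ G.allVars, AttacksVar q F x

def Unattacked (q : List DBAtom) (v : Var) : Prop := ∀ F ∈ q, ¬ AttacksVar q F v

/-- The list order of q is a topological sort of its (hence acyclic) attack graph. -/
def IsTopoSort (q : List DBAtom) : Prop :=
  ∀ i j : Fin q.length, q.get i ≠ q.get j →
    AttacksAtom q (q.get i) (q.get j) → (i : ℕ) < (j : ℕ)

/-! ## Embeddings and ∀embeddings (relative to the list order as topological sort) -/

def uVars (q : List DBAtom) (ℓ : ℕ) : Finset Var := qVars (q.take ℓ)

def headKey : List DBAtom → Finset Var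
  | [] => ∅
  | F :: _ => F.keyVars

/-- ℓ-embedding of q in db. -/
def IsLEmb (q : List DBAtom) (db : Finset DBFact) (ℓ : ℕ) (θ : Assignment) : Prop :=
  θ.Dom = ↑(uVars q ℓ) ∧ Entails db θ q

/-- ℓ-∀embedding of q in db. -/
def IsForallEmb (q : List DBAtom) (db : Finset DBFact) : ℕ → Assignment → Prop
  | 0, θ => IsLEmb q db 0 θ ∧ ∀ r, IsRepair db r → Entails r emptyAssignment q
  | (ℓ + 1), θ =>
      IsLEmb q db (ℓ + 1) θ ∧
      (∀ r, IsRepair db r →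
        Entails r (θ.restrict (↑(uVars q ℓ) ∪ ↑(headKey (q.drop ℓ)))) (q.drop ℓ)) ∧
      IsForallEmb q db ℓ (θ.restrict ↑(uVars q ℓ))

/-- An embedding of q in s: a valuation over vars(q) mapping all atoms of q into s. -/
def IsEmbedding (q : List DBAtom) (s : Finset DBFact) (θ : Assignment) : Prop :=
  θ.Dom = ↑(qVars q) ∧ ∀ F ∈ q, AtomIn s (applyAtom θ F)

/-- Superfrugal repair: every embedding of q in r is a ∀embedding of q in db. -/
def Superfrugal (q : List DBAtom) (db r : Finset DBFact) : Prop :=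
  IsRepair db r ∧ ∀ θ, IsEmbedding q r θ → IsForallEmb q db q.length θ

/-! ## FD satisfaction by sets of valuations; maximal consistent subsets (MCS) -/

def AgreeOn (θ₁ θ₂ : Assignment) (X : Finset Var) : Prop := ∀ x ∈ X, θ₁ x = θ₂ x

def SatFD (N : Set Assignment) (X Y : Finset Var) : Prop :=
  ∀ θ₁ ∈ N, ∀ θ₂ ∈ N, AgreeOn θ₁ θ₂ X → AgreeOn θ₁ θ₂ Y

def SatFDs (N : Set Assignment) (q : List DBAtom) : Prop :=
  ∀ fd ∈ FDSet q, SatFD N fd.1 fd.2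

/-- Maximal consistent subset of a set M of embeddings. -/
def IsMCS (q : List DBAtom) (M N : Set Assignment) : Prop :=
  N ⊆ M ∧ SatFDs N q ∧ ∀ N', N ⊆ N' → N' ⊆ M → SatFDs N' q → N' = N

/-! ## Aggregate operators -/

structure AggOp : Type where
  app : Multiset ℚ≥0 → ℚ
  nonneg : ∀ X : Multiset ℚ≥0, X ≠ 0 → 0 ≤ app X

noncomputable def AggOp.appNN (A : AggOp) (X : Multiset ℚ≥0) : ℚ≥0 := (A.app X).toNNRat

def AggOp.Assoc (A : AggOp) : Prop :=
  ∀ X Y : Multiset ℚ≥0, X ≠ 0 → A.app (X + Y) = A.app (A.appNN X ::ₘ Y)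

def AggOp.Mono (A : AggOp) : Prop :=
  ∀ x x' : List ℚ≥0, x ≠ [] → List.Forall₂ (· ≤ ·) x x' →
    ∀ Y : Multiset ℚ≥0, A.app ↑x ≤ A.app (↑x' + Y)

def evalTrm (θ : Assignment) : Trm → ℚ≥0
  | .var v => (θ v).getD 0
  | .const c => c

/-- The multiset of r-values over a (finite) set of valuations. -/
noncomputable def valsOf (N : Set Assignment) (r : Trm) : Multiset ℚ≥0 :=
  if h : N.Finite then h.toFinset.val.map (fun θ => evalTrm θ r) else 0

/-- Primitive numerical term: a (numerical) variable of the query, or a constant. -/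
def PrimTerm (q : List DBAtom) (r : Trm) : Prop :=
  (∃ v, r = Trm.var v ∧ v ∈ qVars q) ∨ (∃ c, r = Trm.const c)

/-! ## Branches and ∀key-embeddings -/

/-- γ is a branch of the ℓ-∀embedding θ. -/
def IsBranch (q : List DBAtom) (db : Finset DBFact) (ℓ : ℕ) (θ γ : Assignment) : Prop :=
  γ.ExtendsA θ ∧
  (∀ v ∈ γ.Dom \ θ.Dom, Unattacked (applyQ θ (q.drop ℓ)) v) ∧
  (∃ μ, IsForallEmb q db q.length μ ∧ μ.ExtendsA γ)

/-- γ is an (ℓ+1)-∀key-embedding: a branch of θ with domain dom(θ) ∪ key(F_{ℓ+1}). -/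
def IsKeyEmb (q : List DBAtom) (db : Finset DBFact) (ℓ : ℕ) (θ γ : Assignment) : Prop :=
  IsBranch q db ℓ θ γ ∧ γ.Dom = θ.Dom ∪ ↑(headKey (q.drop ℓ))

/-- M(θ): all ∀embeddings of q in db extending θ. -/
def Mset (q : List DBAtom) (db : Finset DBFact) (θ : Assignment) : Set Assignment :=
  {μ | IsForallEmb q db q.length μ ∧ μ.ExtendsA θ}

/-! ## Weakly connected components of the attack graph -/

def UndirectedEdge (p : List DBAtom) (F G : DBAtom) : Prop :=
  F ∈ p ∧ G ∈ p ∧ (AttacksAtom p F G ∨ AttacksAtom p G F)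

/-- S is a maximal weakly connected component of the attack graph of p. -/
def IsWCC (p : List DBAtom) (S : Set DBAtom) : Prop :=
  ∃ F₀ ∈ p, S = {G | Relation.ReflTransGen (UndirectedEdge p) F₀ G}

/-! ## rifi, sequential proofs, n-minimality -/

/-- rifi(q, s, V): valuations over V extending to a valuation over vars(q) mapping q into s. -/
def rifi (q : List DBAtom) (s : Finset DBFact) (V : Finset Var) : Set Assignment :=
  {θ | θ.Dom = ↑V ∧ ∃ μ : Assignment, μ.Dom = ↑(qVars q) ∧ μ.ExtendsA θ ∧
      ∀ F ∈ q, AtomIn s (applyAtom μ F)}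

/-- A sequential proof of FD(p) ⊨ Z → w. -/
def IsSeqProof (p : List DBAtom) (Z : Finset Var) (w : Var) (l : List DBAtom) : Prop :=
  (∀ F ∈ l, F ∈ p) ∧
  (∀ i : Fin l.length, (l.get i).keyVars ⊆ Z ∪ qVars (l.take i.1)) ∧
  w ∈ Z ∪ qVars l

/-- n-minimal repair (with X = vars(q)). -/
def NMinimal (q : List DBAtom) (db r : Finset DBFact) : Prop :=
  IsRepair db r ∧
  ¬ ∃ s : Finset DBFact, IsRepair db s ∧
      (∀ θ, IsEmbedding q s θ → IsEmbedding q r θ) ∧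
      (∃ μ, IsEmbedding q r μ ∧ ¬ IsEmbedding q s μ)

/-! ## Descending chains for aggregate operators -/

def DescChain {α β : Type*} [LT β] (F : Multiset α → β) (s t : α) : Prop :=
  ∀ i : ℕ, F (s ::ₘ Multiset.replicate (i + 1) t) < F (s ::ₘ Multiset.replicate i t)

def BoundedBy {α β : Type*} [LT β] (F : Multiset α → β) (s t : α) (m : ℕ → α) : Prop :=
  ∀ i j : ℕ, 1 ≤ j → ∀ k' k : ℕ, k' ≤ k → k ≤ i →
    F (s ::ₘ Multiset.replicate k' t) <
      F (Multiset.replicate j (m i) + (s ::ₘ Multiset.replicate k t))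

def HasBoundedDescChain {α β : Type*} [LT β] (F : Multiset α → β) : Prop :=
  ∃ s t, DescChain F s t ∧ ∃ m : ℕ → α, BoundedBy F s t m


/-! ## Auxiliary lemmas for stmt2 -/

namespace Stmt2Aux

lemma mapM_f2 {l : List Trm} {cs : List ℚ≥0} (h : l.mapM Trm.const? = some cs) :
    List.Forall₂ (fun a c => a.const? = some c) l cs := by
  rw [← List.mapM'_eq_mapM] at h
  induction l generalizing cs with
  | nil => simp [List.mapM'] at h; simp [h]
  | cons a t ih =>
    simp only [List.mapM'] at h
    cases ha : Trm.const? a with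
    | none => rw [ha] at h; simp at h
    | some c =>
      rw [ha] at h
      cases ht : List.mapM' Trm.const? t with
      | none => rw [ht] at h; simp at h
      | some cs' =>
        rw [ht] at h
        simp at h
        subst h
        exact List.Forall₂.cons ha (ih ht)

lemma toFact?_some {A : DBAtom} {fa : DBFact} (h : A.toFact? = some fa) :
    fa.rel = A.rel ∧ List.Forall₂ (fun a c => a.const? = some c) A.keyArgs fa.keyArgs ∧
      List.Forall₂ (fun a c => a.const? = some c) A.nonkeyArgs fa.nonkeyArgs := by
  unfold DBAtom.toFact? at h
  cases hk : A.keyArgs.mapM Trm.const? with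
  | none => rw [hk] at h; simp at h
  | some ks =>
    rw [hk] at h
    cases hn : A.nonkeyArgs.mapM Trm.const? with
    | none => rw [hn] at h; simp at h
    | some ns =>
      rw [hn] at h
      simp at h
      subst h
      exact ⟨rfl, mapM_f2 hk, mapM_f2 hn⟩

lemma applyAtom_fact {θ : Assignment} {A : DBAtom} {fa : DBFact}
    (h : (applyAtom θ A).toFact? = some fa) :
    fa.rel = A.rel ∧
      List.Forall₂ (fun a c => (applyTrm θ a).const? = some c) A.keyArgs fa.keyArgs ∧
      List.Forall₂ (fun a c => (applyTrm θ a).const? = some c) A.nonkeyArgs fa.nonkeyArgs := by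
  obtain ⟨h1, h2, h3⟩ := toFact?_some h
  exact ⟨h1, List.forall₂_map_left_iff.mp h2, List.forall₂_map_left_iff.mp h3⟩

lemma applyTrm_var_const? {θ : Assignment} {v : Var} {c : ℚ≥0} :
    (applyTrm θ (Trm.var v)).const? = some c ↔ θ v = some c := by
  cases h : θ v <;> simp [applyTrm, h, Trm.const?]

lemma applyTrm_const_const? {θ : Assignment} {d c : ℚ≥0} :
    (applyTrm θ (Trm.const d)).const? = some c ↔ c = d := by
  simp [applyTrm, Trm.const?, eq_comm]

lemma agree_of_f2 {μ ν : Assignment} {l : List Trm} {cs : List ℚ≥0}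
    (h1 : List.Forall₂ (fun a c => (applyTrm μ a).const? = some c) l cs)
    (h2 : List.Forall₂ (fun a c => (applyTrm ν a).const? = some c) l cs)
    {v : Var} (hv : Trm.var v ∈ l) : μ v = ν v := by
  obtain ⟨n, hn⟩ := List.mem_iff_get.mp hv
  obtain ⟨hl1, hg1⟩ := List.forall₂_iff_get.mp h1
  obtain ⟨hl2, hg2⟩ := List.forall₂_iff_get.mp h2
  have e1 := hg1 n.1 n.2 (hl1 ▸ n.2)
  have e2 := hg2 n.1 n.2 (hl2 ▸ n.2)
  rw [hn] at e1 e2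
  rw [applyTrm_var_const?] at e1 e2
  rw [e1, e2]

lemma eq_of_agree_f2 {μ ν : Assignment} {l : List Trm} {cs cs' : List ℚ≥0}
    (h1 : List.Forall₂ (fun a c => (applyTrm μ a).const? = some c) l cs)
    (h2 : List.Forall₂ (fun a c => (applyTrm ν a).const? = some c) l cs')
    (hag : ∀ v, Trm.var v ∈ l → μ v = ν v) : cs = cs' := by
  obtain ⟨hl1, hg1⟩ := List.forall₂_iff_get.mp h1
  obtain ⟨hl2, hg2⟩ := List.forall₂_iff_get.mp h2
  refine List.ext_get (by omega) ?_
  intro i hi1 hi2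
  have hil : i < l.length := by omega
  have e1 := hg1 i hil hi1
  have e2 := hg2 i hil hi2
  cases ha : l.get ⟨i, hil⟩ with
  | var v =>
    rw [ha, applyTrm_var_const?] at e1 e2
    have := hag v (ha ▸ List.get_mem l ⟨i, hil⟩)
    rw [this, e2] at e1
    exact (Option.some.injEq _ _ ▸ e1).symm ▸ rfl
  | const d =>
    rw [ha, applyTrm_const_const?] at e1 e2
    rw [e1, e2]

lemma var?_some {a : Trm} {v : Var} : a.var? = some v ↔ a = Trm.var v := by
  cases a <;> simp [Trm.var?]

lemma mem_keyVars {G : DBAtom} {v : Var} : v ∈ G.keyVars ↔ Trm.var v ∈ G.keyArgs := by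
  simp [DBAtom.keyVars, List.mem_filterMap, var?_some]

lemma mem_allVars {G : DBAtom} {v : Var} :
    v ∈ G.allVars ↔ Trm.var v ∈ G.keyArgs ++ G.nonkeyArgs := by
  simp [DBAtom.allVars, List.mem_filterMap, var?_some]

lemma keyVars_subset_allVars {G : DBAtom} : G.keyVars ⊆ G.allVars := by
  intro v hv
  exact mem_allVars.mpr (List.mem_append_left _ (mem_keyVars.mp hv))

lemma qVars_cons (F : DBAtom) (t : List DBAtom) : qVars (F :: t) = F.allVars ∪ qVars t := rfl

lemma subset_qVars {q : List DBAtom} {F : DBAtom} (h : F ∈ q) : F.allVars ⊆ qVars q := by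
  induction q with
  | nil => simp at h
  | cons G t ih =>
    rw [qVars_cons]
    rcases List.mem_cons.mp h with rfl | h'
    · exact Finset.subset_union_left
    · exact (ih h').trans Finset.subset_union_right

lemma applyAtom_congr {σ μ : Assignment} {G : DBAtom} (h : ∀ v ∈ G.allVars, σ v = μ v) :
    applyAtom σ G = applyAtom μ G := by
  have harg : ∀ a ∈ G.keyArgs ++ G.nonkeyArgs, applyTrm σ a = applyTrm μ a := by
    intro a ha
    cases a with
    | const c => rfl
    | var v =>
      have hv : v ∈ G.allVars := mem_allVars.mpr ha
      simp [applyTrm, h v hv]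
  unfold applyAtom
  rw [List.map_congr_left (fun a ha => harg a (List.mem_append_left _ ha)),
    List.map_congr_left (fun a ha => harg a (List.mem_append_right _ ha))]

lemma dom_some {μ : Assignment} {W : Finset Var} (h : μ.Dom = ↑W) {v : Var} (hv : v ∈ W) :
    ∃ c, μ v = some c := by
  have hm : v ∈ μ.Dom := by rw [h]; exact Finset.mem_coe.mpr hv
  cases hc : μ v with
  | none => exact absurd hc hm
  | some c => exact ⟨c, rfl⟩

lemma keyVars_subset_keycl {q : List DBAtom} {F : DBAtom} (hF : F ∈ q) {v : Var}
    (hv : v ∈ F.keyVars) : v ∈ keycl F q := by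
  refine ⟨subset_qVars hF (keyVars_subset_allVars hv), ?_⟩
  intro N hN t₁ h₁ t₂ h₂ hag y hy
  rw [Finset.mem_singleton] at hy
  subst hy
  exact hag _ hv

lemma attacks_singleton {q : List DBAtom} {F : DBAtom} {v : Var}
    (h1 : v ∈ F.notkeyVars) (h2 : v ∉ keycl F q) : AttacksVar q F v := by
  refine ⟨[v], ?_, ⟨v, rfl, h1⟩, rfl, List.isChain_singleton v⟩
  intro x hx
  rw [List.mem_singleton] at hx
  subst hx
  exact h2

lemma attacks_extend {q : List DBAtom} {F G : DBAtom} {w u : Var}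
    (h : AttacksVar q F w) (hG : G ∈ q) (hw : w ∈ G.allVars) (hu : u ∈ G.allVars)
    (hku : u ∉ keycl F q) : AttacksVar q F u := by
  obtain ⟨l, hnk, ⟨hd, hhd, hhdF⟩, hlast, hch⟩ := h
  refine ⟨l ++ [u], ?_, ⟨hd, ?_, hhdF⟩, ?_, ?_⟩
  · intro x hx
    rcases List.mem_append.mp hx with hx' | hx'
    · exact hnk x hx'
    · rw [List.mem_singleton] at hx'; subst hx'; exact hku
  · cases l with
    | nil => simp at hhd
    | cons a l' => simpa using hhd
  · exact List.getLast?_concat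
  · show List.IsChain (AdjIn q) (l ++ [u]); rw [List.isChain_append]
    refine ⟨hch, List.isChain_singleton u, ?_⟩
    intro x hx y hy
    simp only [List.head?_cons, Option.mem_def, Option.some.injEq] at hy
    rw [hlast] at hx
    simp only [Option.mem_def, Option.some.injEq] at hx
    subst hx; subst hy
    exact ⟨G, hG, hw, hu⟩

end Stmt2Aux

namespace Stmt2Aux

lemma opt_eq_iff {q : List DBAtom} {μ ν : Assignment} (hμ : μ.Dom = ↑(qVars q))
    (hν : ν.Dom = ↑(qVars q)) {v : Var} (hv : v ∈ qVars q) :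
    (μ v).getD 0 = (ν v).getD 0 ↔ μ v = ν v := by
  obtain ⟨c, hc⟩ := dom_some hμ hv
  obtain ⟨d, hd⟩ := dom_some hν hv
  rw [hc, hd]
  simp

lemma agree_atom {r : Finset DBFact} (hcons : DBConsistent r)
    {μ ν : Assignment} {G : DBAtom}
    (hμG : AtomIn r (applyAtom μ G)) (hνG : AtomIn r (applyAtom ν G))
    (hkG : ∀ v ∈ G.keyVars, μ v = ν v) :
    ∀ v ∈ G.allVars, μ v = ν v := by
  obtain ⟨h₁, h₁r, hf₁⟩ := hμG
  obtain ⟨h₂, h₂r, hf₂⟩ := hνG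
  obtain ⟨hrel₁, hk₁, hn₁⟩ := applyAtom_fact hf₁
  obtain ⟨hrel₂, hk₂, hn₂⟩ := applyAtom_fact hf₂
  have hkeq : h₁.keyArgs = h₂.keyArgs :=
    eq_of_agree_f2 hk₁ hk₂ (fun v hv => hkG v (mem_keyVars.mpr hv))
  have heq : h₁ = h₂ := hcons h₁ h₁r h₂ h₂r ⟨hrel₁.trans hrel₂.symm, hkeq⟩
  subst heq
  intro v hv
  rcases List.mem_append.mp (mem_allVars.mp hv) with hv' | hv'
  · exact agree_of_f2 hk₁ hk₂ hv'
  · exact agree_of_f2 hn₁ hn₂ hv'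

lemma agree_keycl {q : List DBAtom} (hsjf : SelfJoinFree q) {r : Finset DBFact}
    (hcons : DBConsistent r) {F : DBAtom} {μ ν : Assignment}
    (hμdom : μ.Dom = ↑(qVars q)) (hνdom : ν.Dom = ↑(qVars q))
    (hμ : ∀ G ∈ q, G ≠ F → AtomIn r (applyAtom μ G))
    (hν : ∀ G ∈ q, G ≠ F → AtomIn r (applyAtom ν G))
    (hkey : ∀ v ∈ F.keyVars, μ v = ν v) :
    ∀ x ∈ keycl F q, μ x = ν x := by
  intro x hx
  obtain ⟨hxq, hFD⟩ := hx
  set t₁ : Var → ℚ≥0 := fun v => (μ v).getD 0 with ht₁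
  set t₂ : Var → ℚ≥0 := fun v => (ν v).getD 0 with ht₂
  have hnodup : q.Nodup := List.Nodup.of_map _ hsjf
  have hsat : ∀ fd ∈ FDSet (q.erase F), FDSatT {t₁, t₂} fd.1 fd.2 := by
    rintro ⟨X, Y⟩ ⟨G, hGe, hpair⟩
    have hGq : G ∈ q := List.mem_of_mem_erase hGe
    have hGF : G ≠ F := (hnodup.mem_erase_iff.mp hGe).1
    injection hpair with hX hY
    subst hX; subst hY
    have core : (∀ v ∈ G.keyVars, t₁ v = t₂ v) → ∀ y ∈ G.allVars, t₁ y = t₂ y := by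
      intro hagk
      have hkG : ∀ v ∈ G.keyVars, μ v = ν v := by
        intro v hv
        have hvq : v ∈ qVars q := subset_qVars hGq (keyVars_subset_allVars hv)
        exact (opt_eq_iff hμdom hνdom hvq).mp (hagk v hv)
      have hall := agree_atom hcons (hμ G hGq hGF) (hν G hGq hGF) hkG
      intro y hy
      simp only [ht₁, ht₂, hall y hy]
    intro s₁ hs₁ s₂ hs₂ hag y hy
    simp only [Set.mem_insert_iff, Set.mem_singleton_iff] at hs₁ hs₂
    rcases hs₁ with rfl | rfl <;> rcases hs₂ with rfl | rfl
    · rfl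
    · exact core hag y hy
    · exact (core (fun v hv => (hag v hv).symm) y hy).symm
    · rfl
  have hres := hFD {t₁, t₂} hsat t₁ (Set.mem_insert _ _) t₂ (by simp)
      (fun v hv => by simp only [ht₁, ht₂]; rw [hkey v hv]) x (Finset.mem_singleton_self x)
  exact (opt_eq_iff hμdom hνdom hxq).mp hres

lemma applyAtom_rel (θ : Assignment) (A : DBAtom) : (applyAtom θ A).rel = A.rel := rfl

lemma hybrid {q : List DBAtom} (hsjf : SelfJoinFree q) {V : Finset Var}
    (hVsub : V ⊆ qVars q)
    {F : DBAtom} (hFq : F ∈ q)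
    (hunatt : ∀ v ∈ V, ¬ AttacksVar q F v)
    {r t : Finset DBFact} (hcons : DBConsistent r)
    {f g : DBFact} (hkeq : f.keyArgs = g.keyArgs)
    (ht : ∀ h ∈ t, h ≠ g → h ∈ r)
    {μ ν : Assignment}
    (hμdom : μ.Dom = ↑(qVars q)) (hμat : ∀ G ∈ q, AtomIn r (applyAtom μ G))
    (hνdom : ν.Dom = ↑(qVars q)) (hνat : ∀ G ∈ q, AtomIn t (applyAtom ν G))
    (hμF : (applyAtom μ F).toFact? = some f)
    (hνF : (applyAtom ν F).toFact? = some g) :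
    ∃ σ : Assignment, σ.Dom = ↑(qVars q) ∧ (∀ G ∈ q, AtomIn r (applyAtom σ G)) ∧
      ∀ v ∈ V, σ v = ν v := by
  classical
  have hrelinj : ∀ G ∈ q, G.rel = F.rel → G = F := fun G hG h =>
    List.inj_on_of_nodup_map hsjf hG hFq h
  have hfrel : f.rel = F.rel := (applyAtom_fact hμF).1
  have hgrel : g.rel = F.rel := (applyAtom_fact hνF).1
  have hν' : ∀ G ∈ q, G ≠ F → AtomIn r (applyAtom ν G) := by
    intro G hG hGF
    obtain ⟨h, hht, hfact⟩ := hνat G hG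
    have hhrel : h.rel = G.rel := (applyAtom_fact hfact).1
    have hne : h ≠ g := by
      intro e
      exact hGF (hrelinj G hG (by rw [← hhrel, e, hgrel]))
    exact ⟨h, ht h hht hne, hfact⟩
  have hkey : ∀ v ∈ F.keyVars, μ v = ν v := by
    have f2μ := (applyAtom_fact hμF).2.1
    have f2ν := (applyAtom_fact hνF).2.1
    rw [← hkeq] at f2ν
    intro v hv
    exact agree_of_f2 f2μ f2ν (mem_keyVars.mp hv)
  have hkeycl := agree_keycl hsjf hcons hμdom hνdom
    (fun G hG _ => hμat G hG) hν' hkey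
  set σ : Assignment := fun v =>
    if v ∈ qVars q then
      (if AttacksVar q F v ∨ v ∈ keycl F q then μ v else ν v)
    else none with hσdef
  have hσ1 : ∀ v, v ∈ qVars q → (AttacksVar q F v ∨ v ∈ keycl F q) → σ v = μ v := by
    intro v h1 h2
    simp only [hσdef]
    rw [if_pos h1, if_pos h2]
  have hσ2 : ∀ v, v ∈ qVars q → ¬ (AttacksVar q F v ∨ v ∈ keycl F q) → σ v = ν v := by
    intro v h1 h2
    simp only [hσdef]
    rw [if_pos h1, if_neg h2]
  have hallF : ∀ v ∈ F.allVars, σ v = μ v := by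
    intro v hv
    have hvq : v ∈ qVars q := subset_qVars hFq hv
    by_cases hP : AttacksVar q F v ∨ v ∈ keycl F q
    · exact hσ1 v hvq hP
    · push_neg at hP
      exfalso
      by_cases hkv : v ∈ F.keyVars
      · exact hP.2 (keyVars_subset_keycl hFq hkv)
      · exact hP.1 (attacks_singleton (Finset.mem_sdiff.mpr ⟨hv, hkv⟩) hP.2)
  refine ⟨σ, ?_, ?_, ?_⟩
  · ext v
    by_cases hq : v ∈ qVars q
    · refine iff_of_true ?_ (Finset.mem_coe.mpr hq)
      obtain ⟨c, hc⟩ := dom_some hμdom hq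
      obtain ⟨d, hd⟩ := dom_some hνdom hq
      by_cases hP : AttacksVar q F v ∨ v ∈ keycl F q
      · change _ ≠ none; show σ v ≠ none; rw [hσ1 v hq hP, hc]; simp
      · change _ ≠ none; show σ v ≠ none; rw [hσ2 v hq hP, hd]; simp
    · refine iff_of_false ?_ (fun h => hq (Finset.mem_coe.mp h))
      change ¬ _ ≠ none
      show ¬ σ v ≠ none
      simp only [hσdef]
      rw [if_neg hq]
      simp
  · intro G hG
    by_cases hGF : G = F
    · subst hGF
      rw [applyAtom_congr hallF]
      exact hμat G hG
    · by_cases hatt : ∃ w ∈ G.allVars, AttacksVar q F w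
      · obtain ⟨w, hwG, hwA⟩ := hatt
        have hall : ∀ v ∈ G.allVars, σ v = μ v := by
          intro v hv
          have hvq : v ∈ qVars q := subset_qVars hG hv
          by_cases hP : AttacksVar q F v ∨ v ∈ keycl F q
          · exact hσ1 v hvq hP
          · push_neg at hP
            exact absurd (attacks_extend hwA hG hwG hv hP.2) hP.1
        rw [applyAtom_congr hall]
        exact hμat G hG
      · push_neg at hatt
        have hall : ∀ v ∈ G.allVars, σ v = ν v := by
          intro v hv
          have hvq : v ∈ qVars q := subset_qVars hG hv
          by_cases hP : AttacksVar q F v ∨ v ∈ keycl F q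
          · rcases hP with hP | hP
            · exact absurd hP (hatt v hv)
            · rw [hσ1 v hvq (Or.inr hP)]
              exact hkeycl v hP
          · exact hσ2 v hvq hP
        rw [applyAtom_congr hall]
        exact hν' G hG hGF
  · intro v hv
    have hvq : v ∈ qVars q := hVsub hv
    by_cases hk : v ∈ keycl F q
    · rw [hσ1 v hvq (Or.inr hk)]
      exact hkeycl v hk
    · refine hσ2 v hvq ?_
      rintro (h | h)
      · exact hunatt v hv h
      · exact hk h

end Stmt2Aux

namespace Stmt2Aux

lemma keyEqual_symm {f g : DBFact} (h : KeyEqual f g) : KeyEqual g f := ⟨h.1.symm, h.2.symm⟩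

lemma keyEqual_trans {f g h : DBFact} (h1 : KeyEqual f g) (h2 : KeyEqual g h) : KeyEqual f h :=
  ⟨h1.1.trans h2.1, h1.2.trans h2.2⟩

lemma repair_exists (db : Finset DBFact) : ∃ r, IsRepair db r := by
  classical
  have hne : (db.powerset.filter (fun x => DBConsistent x)).Nonempty := by
    refine ⟨∅, Finset.mem_filter.mpr ⟨Finset.empty_mem_powerset db, ?_⟩⟩
    intro f hf
    exact absurd hf (Finset.notMem_empty f)
  obtain ⟨r, hr, hmax⟩ := Finset.exists_max_image _ Finset.card hne
  obtain ⟨hrdb, hrcons⟩ := Finset.mem_filter.mp hr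
  refine ⟨r, Finset.mem_powerset.mp hrdb, hrcons, ?_⟩
  intro s hrs hsdb hscons
  have hs : s ∈ db.powerset.filter (fun x => DBConsistent x) :=
    Finset.mem_filter.mpr ⟨Finset.mem_powerset.mpr hsdb, hscons⟩
  exact (Finset.eq_of_subset_of_card_le hrs (hmax s hs)).symm

lemma repair_block {db s : Finset DBFact} (hs : IsRepair db s) {f : DBFact} (hf : f ∈ db) :
    ∃ g ∈ s, KeyEqual f g := by
  by_contra hno
  push_neg at hno
  have hcons : DBConsistent (insert f s) := by
    intro a ha b hb hk
    rcases Finset.mem_insert.mp ha with rfl | ha' <;> rcases Finset.mem_insert.mp hb with rfl | hb'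
    · rfl
    · exact absurd hk (hno b hb')
    · exact absurd (keyEqual_symm hk) (hno a ha')
    · exact hs.2.1 a ha' b hb' hk
  have heq := hs.2.2 (insert f s) (Finset.subset_insert f s)
    (Finset.insert_subset hf hs.1) hcons
  have hfs : f ∈ s := heq ▸ Finset.mem_insert_self f s
  exact hno f hfs ⟨rfl, rfl⟩

lemma swap_repair {db r : Finset DBFact} (hr : IsRepair db r) {f g : DBFact}
    (hf : f ∈ r) (hg : g ∈ db) (hkeq : KeyEqual f g) :
    IsRepair db (insert g (r.erase f)) := by
  refine ⟨Finset.insert_subset hg ((Finset.erase_subset f r).trans hr.1), ?_, ?_⟩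
  · intro a ha b hb hk
    rcases Finset.mem_insert.mp ha with rfl | ha' <;> rcases Finset.mem_insert.mp hb with rfl | hb'
    · rfl
    · exfalso
      have hbf : b = f := hr.2.1 b (Finset.mem_of_mem_erase hb') f hf
        (keyEqual_trans (keyEqual_symm hk) (keyEqual_symm hkeq))
      exact (Finset.mem_erase.mp hb').1 hbf
    · exfalso
      have haf : a = f := hr.2.1 a (Finset.mem_of_mem_erase ha') f hf
        (keyEqual_trans hk (keyEqual_symm hkeq))
      exact (Finset.mem_erase.mp ha').1 haf
    · exact hr.2.1 a (Finset.mem_of_mem_erase ha') b (Finset.mem_of_mem_erase hb') hk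
  · intro s hsub hsdb hscons
    refine Finset.Subset.antisymm ?_ hsub
    intro h hhs
    by_contra hht
    have hhdb : h ∈ db := hsdb hhs
    obtain ⟨g', hg'r, hkeq'⟩ := repair_block hr hhdb
    by_cases hgf : g' = f
    · subst hgf
      have hkg : KeyEqual h g := keyEqual_trans hkeq' hkeq
      have hgs : g ∈ s := hsub (Finset.mem_insert_self g _)
      have heq : h = g := hscons h hhs g hgs hkg
      rw [heq] at hht
      exact hht (Finset.mem_insert_self g _)
    · have hg's : g' ∈ s := hsub (Finset.mem_insert_of_mem (Finset.mem_erase.mpr ⟨hgf, hg'r⟩))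
      have : h = g' := hscons h hhs g' hg's hkeq'
      rw [this] at hht
      exact hht (Finset.mem_insert_of_mem (Finset.mem_erase.mpr ⟨hgf, hg'r⟩))

lemma main_ind (q : List DBAtom) (hsjf : SelfJoinFree q) (db : Finset DBFact)
    (V : Finset Var) (hVsub : V ⊆ qVars q)
    (hunatt : ∀ v ∈ V, ∀ F ∈ q, ¬ AttacksVar q F v) :
    ∀ d : ℕ, ∀ r s : Finset DBFact, IsRepair db r →
      (∀ s', IsRepair db s' → rifi q s' V ⊆ rifi q r V → rifi q s' V = rifi q r V) →
      IsRepair db s → (s \ r).card ≤ d → rifi q r V ⊆ rifi q s V := by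
  intro d
  induction d with
  | zero =>
    intro r s hr _ hs hcard
    have hempty : s \ r = ∅ := Finset.card_eq_zero.mp (Nat.le_zero.mp hcard)
    have hsub : s ⊆ r := Finset.sdiff_eq_empty_iff_subset.mp hempty
    have : r = s := hs.2.2 r hsub hr.1 hr.2.1
    rw [this]
  | succ d ih =>
    intro r s hr hmin hs hcard
    by_cases hA : ∃ f, f ∈ r ∧ f ∉ s ∧ ∃ F ∈ q, ∃ μ : Assignment,
        μ.Dom = ↑(qVars q) ∧ (∀ G ∈ q, AtomIn r (applyAtom μ G)) ∧
        (applyAtom μ F).toFact? = some f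
    · obtain ⟨f, hfr, hfs, F, hFq, μ, hμdom, hμat, hμF⟩ := hA
      obtain ⟨g, hgs, hkeq⟩ := repair_block hs (hr.1 hfr)
      have hgf : g ≠ f := fun e => hfs (e ▸ hgs)
      have hgnr : g ∉ r := by
        intro hgr
        exact hgf (hr.2.1 g hgr f hfr (keyEqual_symm hkeq))
      set t : Finset DBFact := insert g (r.erase f) with htdef
      have htrep : IsRepair db t := swap_repair hr hfr (hs.1 hgs) hkeq
      have hfrel : f.rel = F.rel := (applyAtom_fact hμF).1
      have ht : ∀ h ∈ t, h ≠ g → h ∈ r := by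
        intro h hht hne
        rcases Finset.mem_insert.mp hht with rfl | h'
        · exact absurd rfl hne
        · exact Finset.mem_of_mem_erase h'
      have hsub : rifi q t V ⊆ rifi q r V := by
        intro θ hθ
        obtain ⟨hdomθ, ν, hνdom, hνext, hνat⟩ := hθ
        obtain ⟨h, hht, hhfact⟩ := hνat F hFq
        by_cases hhg : h = g
        · subst hhg
          obtain ⟨σ, hσdom, hσat, hσV⟩ := hybrid hsjf hVsub hFq
            (fun v hv => hunatt v hv F hFq) hr.2.1 hkeq.2 ht hμdom hμat hνdom hνat hμF hhfact
          refine ⟨hdomθ, σ, hσdom, ?_, hσat⟩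
          intro v c hvc
          have hvV : v ∈ V := by
            have : v ∈ θ.Dom := by change _ ≠ none; exact fun e => by rw [hvc] at e; exact Option.some_ne_none c e
            rw [hdomθ] at this
            exact Finset.mem_coe.mp this
          rw [hσV v hvV]
          exact hνext v c hvc
        · refine ⟨hdomθ, ν, hνdom, hνext, ?_⟩
          intro G hG
          obtain ⟨h', hh't, hfact'⟩ := hνat G hG
          have hh'ne : h' ≠ g := by
            intro e
            have hGrel : h'.rel = G.rel := (applyAtom_fact hfact').1
            have hGF : G = F := List.inj_on_of_nodup_map hsjf hG hFq
              (by rw [← hGrel, e, hkeq.1.symm, hfrel])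
            subst hGF
            rw [hfact'] at hhfact
            exact hhg (Option.some.inj hhfact ▸ e)
          exact ⟨h', ht h' hh't hh'ne, hfact'⟩
      have heq : rifi q t V = rifi q r V := hmin t htrep hsub
      have hmint : ∀ s', IsRepair db s' → rifi q s' V ⊆ rifi q t V → rifi q s' V = rifi q t V := by
        intro s' hs' hsub'
        rw [heq] at hsub' ⊢
        exact hmin s' hs' hsub'
      have hst : s \ t = (s \ r).erase g := by
        ext x
        simp only [htdef, Finset.mem_sdiff, Finset.mem_insert, Finset.mem_erase]
        have hxf : x ∈ s → x ≠ f := fun hx e => hfs (e ▸ hx)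
        constructor
        · rintro ⟨hxs, hx⟩
          push_neg at hx
          exact ⟨hx.1, hxs, fun hxr => (hx.2 (hxf hxs) hxr)⟩
        · rintro ⟨hxg, hxs, hxr⟩
          refine ⟨hxs, ?_⟩
          push_neg
          exact ⟨hxg, fun _ => hxr⟩
      have hgsr : g ∈ s \ r := Finset.mem_sdiff.mpr ⟨hgs, hgnr⟩
      have hle : (s \ t).card ≤ d := by
        rw [hst, Finset.card_erase_of_mem hgsr]
        omega
      intro θ hθ
      have hθt : θ ∈ rifi q t V := by rw [heq]; exact hθ
      exact ih t s htrep hmint hs hle hθt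
    · intro θ hθ
      obtain ⟨hdomθ, μ, hμdom, hμext, hμat⟩ := hθ
      refine ⟨hdomθ, μ, hμdom, hμext, ?_⟩
      intro G hG
      obtain ⟨h, hhr, hfact⟩ := hμat G hG
      by_cases hhs : h ∈ s
      · exact ⟨h, hhs, hfact⟩
      · exact absurd ⟨h, hhr, hhs, G, hG, μ, hμdom, hμat, hfact⟩ hA

end Stmt2Aux
/-- If no variable of V is attacked in q, some repair realizes the
intersection of rifi over all repairs. -/
theorem stmt2
    (q : List DBAtom) (hsjf : SelfJoinFree q)
    (db : Finset DBFact)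
    (V : Finset Var) (hV : V.Nonempty) (hVsub : V ⊆ qVars q)
    (hunatt : ∀ v ∈ V, ∀ F ∈ q, ¬ AttacksVar q F v) :
    ∃ r : Finset DBFact, IsRepair db r ∧
      rifi q r V = ⋂ (s : Finset DBFact) (_ : IsRepair db s), rifi q s V := by
  classical
  obtain ⟨r, hr, hmin⟩ : ∃ r, IsRepair db r ∧
      ∀ s, IsRepair db s → rifi q s V ⊆ rifi q r V → rifi q s V = rifi q r V := by
    have hfin : {s : Finset DBFact | IsRepair db s}.Finite :=
      Set.Finite.subset (db.powerset : Finset (Finset DBFact)).finite_toSet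
        (fun s hs => Finset.mem_coe.mpr (Finset.mem_powerset.mpr hs.1))
    have hne : {s : Finset DBFact | IsRepair db s}.Nonempty := by
      obtain ⟨r0, h0⟩ := Stmt2Aux.repair_exists db
      exact ⟨r0, h0⟩
    obtain ⟨r, hr, hm⟩ := Set.Finite.exists_minimalFor
      (fun s => rifi q s V) _ hfin hne
    exact ⟨r, hr, fun s hs hsub => Set.Subset.antisymm hsub (hm hs hsub)⟩
  refine ⟨r, hr, ?_⟩
  apply Set.Subset.antisymm
  · intro θ hθ
    simp only [Set.mem_iInter]
    intro s hs
    exact Stmt2Aux.main_ind q hsjf db V hVsub hunatt ((s \ r).card) r s hr hmin hs le_rfl hθ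
  · intro θ hθ
    simp only [Set.mem_iInter] at hθ
    exact hθ r hr
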